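/- Let n ≥ 2 be a natural number and x a nonzero complex number. The n×n block-diagonal matrix M consisting of the (n-2)×(n-2) identity matrix in the upper-left block and the 2×2 matrix [[0,1],[x,0]] in the lower-right block (all other entries 0) is invertible and satisfies tr(Mᵀ · M⁻¹) = (n-2) + x + x⁻¹. -/

import Mathlib

open Matrix

/-- For `n ≥ 2` and nonzero `x : ℂ`, the block-diagonal matrix with the `(n-2)×(n-2)`
identity in the upper-left block and `[[0,1],[x,0]]` in the lower-right block is invertible
and satisfies `tr(Mᵀ * M⁻¹) = (n-2) + x + x⁻¹`. -/
theorem blockMatrix_trace_transpose_mul_inv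
    (n : ℕ) (hn : 2 ≤ n) (x : ℂ) (hx : x ≠ 0)
    (M : Matrix (Fin n) (Fin n) ℂ)
    (hM : M = fun i j =>
      if i.val < n - 2 then (if i = j then 1 else 0)
      else if i.val = n - 2 ∧ j.val = n - 1 then 1
      else if i.val = n - 1 ∧ j.val = n - 2 then x
      else 0) :
    IsUnit M ∧ (Mᵀ * M⁻¹).trace = ((n : ℂ) - 2) + x + x⁻¹ := by
  obtain ⟨m, rfl⟩ : ∃ m, n = m + 2 := ⟨n - 2, by omega⟩
  have e2 : m + 2 - 2 = m := rfl
  have e1 : m + 2 - 1 = m + 1 := rfl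
  rw [e2, e1] at hM
  subst hM
  set M : Matrix (Fin (m+2)) (Fin (m+2)) ℂ := fun i j =>
      if i.val < m then (if i = j then 1 else 0)
      else if i.val = m ∧ j.val = m + 1 then 1
      else if i.val = m + 1 ∧ j.val = m then x
      else 0 with hM
  set N : Matrix (Fin (m+2)) (Fin (m+2)) ℂ := fun i j =>
      if i.val < m then (if i = j then 1 else 0)
      else if i.val = m ∧ j.val = m + 1 then x⁻¹
      else if i.val = m + 1 ∧ j.val = m then 1
      else 0 with hN
  have tri : ∀ i : Fin (m+2), i.val < m ∨ i.val = m ∨ i.val = m + 1 := fun i => by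
    have := i.isLt; omega
  have hMN : M * N = 1 := by
    ext i j
    rw [Matrix.mul_apply]
    rcases tri i with hi | hi | hi
    · rw [Finset.sum_eq_single i]
      · simp only [hM, hN, hi, if_pos, one_apply]
        simp [Fin.ext_iff]
      · intro k _ hk
        simp [hM, hi, hk.symm]
      · simp
    · have hia : i = ⟨m, by omega⟩ := Fin.ext hi
      rw [Finset.sum_eq_single ⟨m+1, by omega⟩]
      · simp only [hM, hN, hi, one_apply]
        simp [hia, Fin.ext_iff, eq_comm]
      · intro k _ hk
        have : k.val ≠ m + 1 := fun h => hk (Fin.ext h)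
        simp [hM, hi, this]
      · simp
    · have hib : i = ⟨m+1, by omega⟩ := Fin.ext hi
      rw [Finset.sum_eq_single ⟨m, by omega⟩]
      · simp only [hM, hN, hi, one_apply]
        simp [hib, Fin.ext_iff, hx, eq_comm]
      · intro k _ hk
        have : k.val ≠ m := fun h => hk (Fin.ext h)
        simp [hM, hi, this]
      · simp
  have hUnit : IsUnit M := (Matrix.isUnit_iff_isUnit_det M).mpr (Matrix.isUnit_det_of_right_inverse hMN)
  have hInv : M⁻¹ = N := inv_eq_right_inv hMN
  refine ⟨hUnit, ?_⟩
  rw [hInv]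
  rw [Matrix.trace]
  have hdiag : ∀ i : Fin (m+2), (Mᵀ * N).diag i =
      if i.val < m then 1 else if i.val = m then x else x⁻¹ := by
    intro i
    simp only [Matrix.diag, Matrix.mul_apply, Matrix.transpose_apply]
    rcases tri i with hi | hi | hi
    · rw [Finset.sum_eq_single i]
      · simp [hM, hN, hi]
      · intro k _ hk
        have h1 : i.val ≠ m + 1 := by omega
        have h2 : i.val ≠ m := by omega
        simp [hM, hN, hk, h1, h2]
      · simp
    · rw [Finset.sum_eq_single ⟨m+1, by omega⟩]
      · have h1 : ¬ (m + 1 < m) := by omega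
        simp [hM, hN, hi, h1]
      · intro k _ hk
        have h1 : k.val ≠ m + 1 := fun h => hk (Fin.ext h)
        have h2 : i.val ≠ m + 1 := by omega
        have h3 : ¬ (i.val < m) := by omega
        simp [hM, hN, hi, h1, h2, h3]
        omega
      · simp
    · rw [Finset.sum_eq_single ⟨m, by omega⟩]
      · have h1 : ¬ (m + 1 < m) := by omega
        simp [hM, hN, hi, h1]
      · intro k _ hk
        have h1 : k.val ≠ m := fun h => hk (Fin.ext h)
        have h2 : i.val ≠ m := by omega
        have h3 : ¬ (i.val < m) := by omega
        simp [hM, hN, hi, h1, h2, h3]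
        omega
      · simp
  rw [Fintype.sum_congr _ _ hdiag]
  rw [Fin.sum_univ_eq_sum_range (fun k => if k < m then (1:ℂ) else if k = m then x else x⁻¹)]
  rw [Finset.sum_range_succ, Finset.sum_range_succ]
  rw [Finset.sum_congr rfl (fun k hk => if_pos (Finset.mem_range.mp hk))]
  simp
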